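/- Let z = x + iy with y > 0 and suppose sup_{n≥0} ‖D_n‖ < ∞. Let F = (F_n)_{n≥0} be a matrix solution of the eigenvalue equation at z with F_0 = I and Σ_{n≥0} ‖F_n‖_F² < ∞, and set M := −F_1 D_0^{-1}. Then Σ_{k=1}^{∞} ‖F_k‖_F² ≤ ‖D_0²‖_F · ‖M‖_F / y. -/

import Mathlib

open Matrix

noncomputable section

/-- The complexification of a real matrix. -/
def cmat {l : ℕ} (A : Matrix (Fin l) (Fin l) ℝ) : Matrix (Fin l) (Fin l) ℂ :=
  A.map (Complex.ofReal)

/-- The operator norm of a real `l×l` matrix. -/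
def opNorm {l : ℕ} (A : Matrix (Fin l) (Fin l) ℝ) : ℝ :=
  ‖Matrix.toEuclideanCLM (𝕜 := ℝ) (n := Fin l) A‖

/-- The Frobenius norm of a complex `l×l` matrix: `‖A‖_F = sqrt(tr(A*A))`. -/
def frob {l : ℕ} (A : Matrix (Fin l) (Fin l) ℂ) : ℝ :=
  Real.sqrt ((Aᴴ * A).trace.re)

/-- `U` is a matrix solution of the eigenvalue equation at `w`. -/
def IsMatSol {l : ℕ} (D V : ℕ → Matrix (Fin l) (Fin l) ℝ) (w : ℂ)
    (U : ℕ → Matrix (Fin l) (Fin l) ℂ) : Prop :=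
  ∀ n : ℕ, 1 ≤ n →
    cmat (D n) * U (n + 1) + cmat (D (n - 1)) * U (n - 1) + cmat (V n) * U n = w • U n

namespace SumFrobAux
attribute [local instance] Matrix.frobeniusSeminormedAddCommGroup Matrix.frobeniusNormedRing

variable {l : ℕ}

lemma trace_re_eq_sum (A : Matrix (Fin l) (Fin l) ℂ) :
    ((Aᴴ * A).trace).re = ∑ i, ∑ j, ‖A i j‖ ^ 2 := by
  have h : ((Aᴴ * A).trace) = ∑ j, ∑ i, (starRingEnd ℂ) (A i j) * A i j := by
    simp [Matrix.trace, Matrix.diag, Matrix.mul_apply, Matrix.conjTranspose_apply]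
  rw [h, Complex.re_sum, Finset.sum_comm]
  refine Finset.sum_congr rfl fun i _ => ?_
  rw [Complex.re_sum]
  refine Finset.sum_congr rfl fun j _ => ?_
  rw [Complex.mul_re]
  simp [Complex.conj_re, Complex.conj_im, Complex.sq_norm,
    Complex.normSq_apply]

lemma frob_eq_sqrt_sum (A : Matrix (Fin l) (Fin l) ℂ) :
    frob A = Real.sqrt (∑ i, ∑ j, ‖A i j‖ ^ 2) := by
  rw [frob, trace_re_eq_sum]

lemma sum_sq_nonneg (A : Matrix (Fin l) (Fin l) ℂ) :
    0 ≤ ∑ i, ∑ j, ‖A i j‖ ^ 2 := by positivity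

lemma frob_nonneg (A : Matrix (Fin l) (Fin l) ℂ) : 0 ≤ frob A := Real.sqrt_nonneg _

lemma frob_sq (A : Matrix (Fin l) (Fin l) ℂ) : frob A ^ 2 = ((Aᴴ * A).trace).re := by
  rw [frob, Real.sq_sqrt]
  rw [trace_re_eq_sum]; exact sum_sq_nonneg A

lemma frob_eq_norm (A : Matrix (Fin l) (Fin l) ℂ) : frob A = ‖A‖ := by
  rw [frob_eq_sqrt_sum, Matrix.frobenius_norm_def, Real.sqrt_eq_rpow]
  congr 1
  refine Finset.sum_congr rfl fun i _ => Finset.sum_congr rfl fun j _ => ?_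
  rw [Real.rpow_two]

lemma frob_mul_le (A B : Matrix (Fin l) (Fin l) ℂ) : frob (A * B) ≤ frob A * frob B := by
  rw [frob_eq_norm, frob_eq_norm, frob_eq_norm]
  exact Matrix.frobenius_norm_mul A B




lemma trace_conj_swap (A B : Matrix (Fin l) (Fin l) ℂ) :
    (Aᴴ * B).trace = star ((Bᴴ * A).trace) := by
  rw [← Matrix.trace_conjTranspose, Matrix.conjTranspose_mul, Matrix.conjTranspose_conjTranspose]

lemma trace_herm_im (A B : Matrix (Fin l) (Fin l) ℂ) (hB : Bᴴ = B) :
    ((Aᴴ * (B * A)).trace).im = 0 := by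
  have h : star ((Aᴴ * (B * A)).trace) = (Aᴴ * (B * A)).trace := by
    rw [← Matrix.trace_conjTranspose]
    congr 1
    rw [Matrix.conjTranspose_mul, Matrix.conjTranspose_mul, Matrix.conjTranspose_conjTranspose,
      hB, Matrix.mul_assoc]
  have := Complex.conj_eq_iff_im.mp h
  exact this

lemma trace_cs (A B : Matrix (Fin l) (Fin l) ℂ) : ‖(Aᴴ * B).trace‖ ≤ frob A * frob B := by
  have h : (Aᴴ * B).trace = ∑ p : Fin l × Fin l, (starRingEnd ℂ) (A p.2 p.1) * B p.2 p.1 := by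
    rw [Fintype.sum_prod_type]
    simp [Matrix.trace, Matrix.diag, Matrix.mul_apply, Matrix.conjTranspose_apply]
  rw [h]
  calc ‖∑ p : Fin l × Fin l, (starRingEnd ℂ) (A p.2 p.1) * B p.2 p.1‖
      ≤ ∑ p : Fin l × Fin l, ‖A p.2 p.1‖ * ‖B p.2 p.1‖ := by
        refine (norm_sum_le _ _).trans (le_of_eq (Finset.sum_congr rfl fun p _ => ?_))
        rw [norm_mul, RCLike.norm_conj]
    _ ≤ Real.sqrt (∑ p : Fin l × Fin l, ‖A p.2 p.1‖ ^ 2) *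
        Real.sqrt (∑ p : Fin l × Fin l, ‖B p.2 p.1‖ ^ 2) :=
        Real.sum_mul_le_sqrt_mul_sqrt _ _ _
    _ = frob A * frob B := by
        rw [frob_eq_sqrt_sum, frob_eq_sqrt_sum]
        congr 1 <;> · rw [Fintype.sum_prod_type, Finset.sum_comm]

lemma cmat_mul (A B : Matrix (Fin l) (Fin l) ℝ) : cmat (A * B) = cmat A * cmat B := by
  ext i j
  simp [cmat, Matrix.mul_apply]

lemma cmat_herm {A : Matrix (Fin l) (Fin l) ℝ} (hA : A.IsSymm) : (cmat A)ᴴ = cmat A := by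
  ext i j
  simp [cmat, Matrix.conjTranspose_apply, Complex.conj_ofReal, hA.apply]

lemma frob_cmat_le (A : Matrix (Fin l) (Fin l) ℝ) :
    frob (cmat A) ≤ Real.sqrt l * opNorm A := by
  have hcol : ∀ j, ∑ i, (A i j) ^ 2 ≤ (opNorm A) ^ 2 := by
    intro j
    have h1 : (Matrix.toEuclideanCLM (𝕜 := ℝ) (n := Fin l) A) (EuclideanSpace.single j 1)
        = (WithLp.equiv 2 _).symm (fun i => A i j) := by
      show (Matrix.toEuclideanCLM (𝕜 := ℝ) A) ((WithLp.equiv 2 _).symm (Pi.single j 1)) = _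
      rw [WithLp.equiv_symm_apply, Matrix.toEuclideanCLM_toLp, ← Matrix.toLin'_apply]
      congr 1
      rw [Matrix.toLin'_apply]
      simp
      rfl
    have h2 : ‖(Matrix.toEuclideanCLM (𝕜 := ℝ) (n := Fin l) A) (EuclideanSpace.single j 1)‖
        ≤ opNorm A := by
      calc _ ≤ opNorm A * ‖EuclideanSpace.single (𝕜 := ℝ) j (1:ℝ)‖ :=
            ContinuousLinearMap.le_opNorm _ _
        _ = opNorm A := by rw [EuclideanSpace.norm_single]; simp
    have h3 : ‖(Matrix.toEuclideanCLM (𝕜 := ℝ) (n := Fin l) A) (EuclideanSpace.single j 1)‖ ^ 2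
        = ∑ i, (A i j) ^ 2 := by
      rw [h1, EuclideanSpace.norm_eq, Real.sq_sqrt (by positivity)]
      refine Finset.sum_congr rfl fun i _ => ?_
      rw [WithLp.equiv_symm_apply, PiLp.toLp_apply]
      rw [Real.norm_eq_abs, sq_abs]
    rw [← h3]
    exact pow_le_pow_left₀ (norm_nonneg _) h2 2
  have hsum : ∑ i, ∑ j, ‖(cmat A) i j‖ ^ 2 ≤ l * (opNorm A) ^ 2 := by
    have : ∑ i, ∑ j, ‖(cmat A) i j‖ ^ 2 = ∑ j, ∑ i, (A i j) ^ 2 := by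
      rw [Finset.sum_comm]
      refine Finset.sum_congr rfl fun j _ => Finset.sum_congr rfl fun i _ => ?_
      simp [cmat, Complex.norm_real, Real.norm_eq_abs, sq_abs]
    rw [this]
    calc ∑ j, ∑ i, (A i j) ^ 2 ≤ ∑ _j : Fin l, (opNorm A) ^ 2 :=
          Finset.sum_le_sum fun j _ => hcol j
      _ = l * (opNorm A) ^ 2 := by simp [Finset.sum_const, nsmul_eq_mul]
  rw [frob_eq_sqrt_sum]
  calc Real.sqrt (∑ i, ∑ j, ‖(cmat A) i j‖ ^ 2) ≤ Real.sqrt (l * (opNorm A) ^ 2) :=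
        Real.sqrt_le_sqrt hsum
    _ = Real.sqrt l * opNorm A := by
        rw [Real.sqrt_mul (by positivity)]
        congr 1
        exact Real.sqrt_sq (norm_nonneg _)

end SumFrobAux

open SumFrobAux Filter in
/-- Upper bound `Σ_{k≥1} ‖F_k‖_F² ≤ ‖D_0²‖_F ‖M‖_F / y` for a square-summable matrix solution
`F` at `z = x + iy`, `y > 0`, with `F_0 = I` and `M := −F_1 D_0^{-1}`. -/
theorem sum_frob_sq_le (l : ℕ) (hl : 1 ≤ l)
    (D V : ℕ → Matrix (Fin l) (Fin l) ℝ)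
    (hDsymm : ∀ n, (D n).IsSymm) (hVsymm : ∀ n, (V n).IsSymm)
    (hDinv : ∀ n, IsUnit (D n).det)
    (hDbdd : ∃ C : ℝ, ∀ n, opNorm (D n) ≤ C)
    (x y : ℝ) (hy : 0 < y)
    (F : ℕ → Matrix (Fin l) (Fin l) ℂ)
    (hF : IsMatSol D V ((x : ℂ) + (y : ℂ) * Complex.I) F) (hF0 : F 0 = 1)
    (hFl2 : Summable (fun n : ℕ => frob (F n) ^ 2)) :
    ∑' k : ℕ, frob (F (k + 1)) ^ 2
      ≤ frob (cmat (D 0 * D 0)) * frob (-(F 1) * (cmat (D 0))⁻¹) / y := by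
  classical
  obtain ⟨C, hC⟩ := hDbdd
  have hC0 : 0 ≤ C := le_trans (norm_nonneg _) (hC 0)
  set z : ℂ := (x : ℂ) + (y : ℂ) * Complex.I with hz
  have hzim : z.im = y := by simp [hz]
  set e : ℕ → ℝ := fun n => (((F n)ᴴ * F n).trace).re with he
  set S : ℕ → ℂ := fun n => (((F n)ᴴ * (cmat (D n) * F (n + 1))).trace) with hSdef
  have hfe : ∀ n, frob (F n) ^ 2 = e n := fun n => frob_sq (F n)
  -- step identity
  have hstep : ∀ n : ℕ, (S (n + 1)).im = (S n).im + y * e (n + 1) := by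
    intro n
    have heq := hF (n + 1) (Nat.le_add_left 1 n)
    simp only [Nat.add_sub_cancel] at heq
    have h2 : (F (n+1))ᴴ * (cmat (D (n+1)) * F (n+1+1))
        + (F (n+1))ᴴ * (cmat (D n) * F n)
        + (F (n+1))ᴴ * (cmat (V (n+1)) * F (n+1))
        = z • ((F (n+1))ᴴ * F (n+1)) := by
      rw [← Matrix.mul_add, ← Matrix.mul_add, heq, Matrix.mul_smul]
    have h3 := congrArg Matrix.trace h2
    simp only [Matrix.trace_add, Matrix.trace_smul] at h3
    have hs2 : ((F (n+1))ᴴ * (cmat (D n) * F n)).trace = star (S n) := by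
      rw [trace_conj_swap]
      congr 2
      rw [Matrix.conjTranspose_mul, cmat_herm (hDsymm n), Matrix.mul_assoc]
    have hs3 : (((F (n+1))ᴴ * (cmat (V (n+1)) * F (n+1))).trace).im = 0 :=
      trace_herm_im _ _ (cmat_herm (hVsymm (n+1)))
    have htr_im : (((F (n+1))ᴴ * F (n+1)).trace).im = 0 := by
      have := trace_herm_im (F (n+1)) 1 Matrix.conjTranspose_one
      rwa [Matrix.one_mul] at this
    rw [hs2] at h3
    have h4 := congrArg Complex.im h3
    simp only [Complex.add_im, Complex.smul_im] at h4
    rw [hs3] at h4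
    have hstar : (star (S n)).im = -(S n).im := by
      simp [Complex.conj_im]
    rw [hstar] at h4
    have hrhs : (z • (((F (n+1))ᴴ * F (n+1)).trace)).im = y * e (n+1) := by
      rw [smul_eq_mul, Complex.mul_im, htr_im, hzim]
      simp [he]
    rw [hrhs] at h4
    have : (S (n+1)).im + -(S n).im + 0 = y * e (n+1) := by
      convert h4 using 2
    linarith
  -- telescoping
  have hpart : ∀ N, ∑ k ∈ Finset.range N, y * e (k + 1) = (S N).im - (S 0).im := by
    intro N
    induction N with
    | zero => simp
    | succ n ih => rw [Finset.sum_range_succ, ih, hstep n]; ring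
  -- summability
  have hFl2' : Summable e := by
    have hfun : (fun n => frob (F n) ^ 2) = e := funext hfe
    rwa [hfun] at hFl2
  have hsum1 : Summable (fun k => e (k + 1)) := (summable_nat_add_iff 1).mpr hFl2'
  have hlim1 : Tendsto (fun N => ∑ k ∈ Finset.range N, e (k + 1)) atTop
      (nhds (∑' k, e (k + 1))) := hsum1.hasSum.tendsto_sum_nat
  -- frob tends to zero
  have hf0 : Tendsto (fun n => frob (F n)) atTop (nhds 0) := by
    have h1 : Tendsto (fun n => frob (F n) ^ 2) atTop (nhds 0) := hFl2.tendsto_atTop_zero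
    have h2 := (Real.continuous_sqrt.tendsto 0).comp h1
    have h3 : (fun n => Real.sqrt (frob (F n) ^ 2)) = fun n => frob (F n) :=
      funext fun n => Real.sqrt_sq (frob_nonneg _)
    rw [Real.sqrt_zero] at h2
    rw [← h3]
    exact h2
  -- bound on S
  have hSb : ∀ n, ‖(S n).im‖ ≤ frob (F n) * (Real.sqrt l * C * frob (F (n+1))) := by
    intro n
    have h1 : ‖S n‖ ≤ frob (F n) * frob (cmat (D n) * F (n+1)) := trace_cs _ _
    have h2 : frob (cmat (D n) * F (n+1)) ≤ Real.sqrt l * C * frob (F (n+1)) := by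
      calc frob (cmat (D n) * F (n+1)) ≤ frob (cmat (D n)) * frob (F (n+1)) := frob_mul_le _ _
        _ ≤ Real.sqrt l * C * frob (F (n+1)) := by
            refine mul_le_mul_of_nonneg_right ?_ (frob_nonneg _)
            calc frob (cmat (D n)) ≤ Real.sqrt l * opNorm (D n) := frob_cmat_le _
              _ ≤ Real.sqrt l * C := mul_le_mul_of_nonneg_left (hC n) (Real.sqrt_nonneg _)
    calc ‖(S n).im‖ ≤ ‖S n‖ := by
          rw [Real.norm_eq_abs]
          exact Complex.abs_im_le_norm (S n)
      _ ≤ frob (F n) * frob (cmat (D n) * F (n+1)) := h1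
      _ ≤ frob (F n) * (Real.sqrt l * C * frob (F (n+1))) :=
          mul_le_mul_of_nonneg_left h2 (frob_nonneg _)
  have hS0lim : Tendsto (fun n => (S n).im) atTop (nhds 0) := by
    refine squeeze_zero_norm hSb ?_
    have hshift : Tendsto (fun n => frob (F (n+1))) atTop (nhds 0) :=
      hf0.comp (tendsto_add_atTop_nat 1)
    have := hf0.mul ((tendsto_const_nhds (x := Real.sqrt l * C)).mul hshift)
    simpa using this
  -- key identity
  have hkey : y * (∑' k, e (k + 1)) = -(S 0).im := by
    have hL : Tendsto (fun N => ∑ k ∈ Finset.range N, y * e (k + 1)) atTop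
        (nhds (y * ∑' k, e (k + 1))) := by
      simpa [Finset.mul_sum] using hlim1.const_mul y
    have hfun : (fun N => ∑ k ∈ Finset.range N, y * e (k + 1))
        = fun N => (S N).im - (S 0).im := funext hpart
    rw [hfun] at hL
    have hR : Tendsto (fun N => (S N).im - (S 0).im) atTop (nhds (0 - (S 0).im)) :=
      hS0lim.sub_const _
    have := tendsto_nhds_unique hL hR
    rw [this]; ring
  -- compute S 0
  have hdet : IsUnit (cmat (D 0)).det := by
    have h1 : (cmat (D 0)).det = ((D 0).det : ℂ) := by
      exact (RingHom.map_det Complex.ofRealHom (D 0)).symm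
    rw [h1, isUnit_iff_ne_zero]
    exact Complex.ofReal_ne_zero.mpr (hDinv 0).ne_zero
  set M : Matrix (Fin l) (Fin l) ℂ := -(F 1) * (cmat (D 0))⁻¹ with hMdef
  have hM : M * cmat (D 0) = -(F 1) := Matrix.nonsing_inv_mul_cancel_right _ _ hdet
  have hsymm0 : (D 0 * D 0).IsSymm := by
    show (D 0 * D 0)ᵀ = D 0 * D 0
    rw [Matrix.transpose_mul, (hDsymm 0).eq]
  have hS0 : S 0 = -(((cmat (D 0 * D 0))ᴴ * M).trace) := by
    show (((F 0)ᴴ * (cmat (D 0) * F 1)).trace) = _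
    rw [hF0, Matrix.conjTranspose_one, Matrix.one_mul]
    have hF1 : F 1 = -(M * cmat (D 0)) := by rw [hM, neg_neg]
    rw [hF1, Matrix.mul_neg, Matrix.trace_neg]
    congr 1
    rw [← Matrix.mul_assoc, Matrix.trace_mul_comm, ← Matrix.mul_assoc, ← cmat_mul,
      cmat_herm hsymm0]
  -- conclude
  have hCS : ((cmat (D 0 * D 0))ᴴ * M).trace.im ≤ frob (cmat (D 0 * D 0)) * frob M := by
    calc ((cmat (D 0 * D 0))ᴴ * M).trace.im ≤ ‖((cmat (D 0 * D 0))ᴴ * M).trace‖ := by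
          exact le_trans (le_abs_self _) (Complex.abs_im_le_norm _)
      _ ≤ frob (cmat (D 0 * D 0)) * frob M := trace_cs _ _
  have him : -(S 0).im = ((cmat (D 0 * D 0))ᴴ * M).trace.im := by rw [hS0]; simp
  have htsum : ∑' k : ℕ, frob (F (k + 1)) ^ 2 = ∑' k, e (k + 1) :=
    tsum_congr fun k => hfe (k + 1)
  rw [htsum, le_div_iff₀ hy]
  have : y * (∑' k, e (k + 1)) ≤ frob (cmat (D 0 * D 0)) * frob M := by
    rw [hkey, him]; exact hCS
  linarith
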